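/- Let k be a field of characteristic p > 0, R = k[x_1,…,x_n], 1 ≤ d ≤ n, and I = (x_1,…,x_d). Let s ∈ R be such that every multi-exponent α in the support of s satisfies α_1 + ⋯ + α_d ≥ d(p-1). Then for every integer m ≥ 0 and every w ∈ I^{mp+1}, one has Tr(s·w) ∈ I^{m+1}. -/

import Mathlib

open MvPolynomial
open scoped Classical

section Aux

variable {k : Type*} [CommRing k] {n : ℕ}

/-- Sum of the first `d` exponents. -/
def sdeg (n d : ℕ) (γ : Fin n →₀ ℕ) : ℕ :=
  ∑ i ∈ Finset.univ.filter (fun i : Fin n => (i : ℕ) < d), γ i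

lemma sdeg_add (d : ℕ) (a b : Fin n →₀ ℕ) :
    sdeg n d (a + b) = sdeg n d a + sdeg n d b := by
  simp [sdeg, Finset.sum_add_distrib]

lemma card_filter_lt (d : ℕ) (h : d ≤ n) :
    (Finset.univ.filter (fun i : Fin n => (i : ℕ) < d)).card = d := by
  have : (Finset.univ.filter (fun i : Fin n => (i : ℕ) < d)) =
      Finset.univ.map (Fin.castLEEmb h) := by
    ext i
    simp only [Finset.mem_filter, Finset.mem_univ, true_and, Finset.mem_map,
      Fin.castLEEmb_apply]
    constructor
    · intro hi; exact ⟨⟨i, hi⟩, rfl⟩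
    · rintro ⟨j, rfl⟩; exact j.2.trans_le (le_refl d)
  rw [this]; simp

lemma sdeg_single (d : ℕ) (i : Fin n) (hi : (i : ℕ) < d) :
    sdeg n d (Finsupp.single i 1) = 1 := by
  rw [sdeg]
  rw [Finset.sum_eq_single i]
  · simp
  · intro j _ hj; exact Finsupp.single_eq_of_ne' (Ne.symm hj)
  · intro hmem; exact absurd (Finset.mem_filter.2 ⟨Finset.mem_univ i, hi⟩) hmem

/-- The ideal of polynomials all of whose exponents have `sdeg ≥ N`. -/
def Jid (k : Type*) [CommRing k] (n d N : ℕ) : Ideal (MvPolynomial (Fin n) k) where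
  carrier := {f | ∀ γ ∈ f.support, N ≤ sdeg n d γ}
  zero_mem' := by simp
  add_mem' := by
    intro f g hf hg γ hγ
    rcases Finset.mem_union.1 (MvPolynomial.support_add hγ) with h | h
    · exact hf γ h
    · exact hg γ h
  smul_mem' := by
    intro c f hf γ hγ
    rw [smul_eq_mul] at hγ
    rcases Finset.mem_add.1 (MvPolynomial.support_mul c f hγ) with ⟨a, ha, b, hb, rfl⟩
    rw [sdeg_add]
    exact le_add_left (hf b hb)

lemma mul_mem_Jid {d N M : ℕ} {f g : MvPolynomial (Fin n) k}
    (hf : f ∈ Jid k n d N) (hg : g ∈ Jid k n d M) : f * g ∈ Jid k n d (N + M) := by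
  intro γ hγ
  rcases Finset.mem_add.1 (MvPolynomial.support_mul f g hγ) with ⟨a, ha, b, hb, rfl⟩
  rw [sdeg_add]
  exact add_le_add (hf a ha) (hg b hb)

lemma pow_le_Jid [Nontrivial k] (d N : ℕ) :
    (Ideal.span ((fun i : Fin n => (X i : MvPolynomial (Fin n) k)) ''
        {i : Fin n | (i : ℕ) < d})) ^ N ≤ Jid k n d N := by
  induction N with
  | zero => intro f _ γ _; exact Nat.zero_le _
  | succ N ih =>
    rw [pow_succ]
    refine Ideal.mul_le.2 fun f hf g hg => ?_
    have hg1 : g ∈ Jid k n d 1 := by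
      refine Ideal.span_le.2 ?_ hg
      rintro _ ⟨i, hi, rfl⟩ γ hγ
      rw [MvPolynomial.support_X] at hγ
      rw [Finset.mem_singleton] at hγ
      subst hγ
      rw [sdeg_single d i hi]
    exact mul_mem_Jid (ih hf) hg1

lemma monomial_mem_pow (d : ℕ) (N : ℕ) :
    ∀ (γ : Fin n →₀ ℕ) (c : k), N ≤ sdeg n d γ →
      monomial γ c ∈ (Ideal.span ((fun i : Fin n => (X i : MvPolynomial (Fin n) k)) ''
        {i : Fin n | (i : ℕ) < d})) ^ N := by
  induction N with
  | zero => intro γ c _; simp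
  | succ N ih =>
    intro γ c hγ
    have hpos : 0 < sdeg n d γ := lt_of_lt_of_le (Nat.succ_pos N) hγ
    obtain ⟨i, hiS, hi0⟩ := Finset.exists_ne_zero_of_sum_ne_zero (Nat.pos_iff_ne_zero.1 hpos)
    have hid : (i : ℕ) < d := (Finset.mem_filter.1 hiS).2
    have hle : Finsupp.single i 1 ≤ γ := Finsupp.single_le_iff.2 (Nat.one_le_iff_ne_zero.2 hi0)
    have hγeq : Finsupp.single i 1 + (γ - Finsupp.single i 1) = γ := add_tsub_cancel_of_le hle
    have hsd : N ≤ sdeg n d (γ - Finsupp.single i 1) := by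
      have := sdeg_add d (Finsupp.single i 1) (γ - Finsupp.single i 1)
      rw [hγeq, sdeg_single d i hid] at this
      omega
    have heq : monomial γ c = X i * monomial (γ - Finsupp.single i 1) c := by
      rw [← hγeq, monomial_single_add, pow_one, hγeq]
    rw [heq, pow_succ']
    exact Ideal.mul_mem_mul (Ideal.subset_span ⟨i, hid, rfl⟩) (ih _ c hsd)

lemma mem_pow_of_support (d : ℕ) (N : ℕ) (f : MvPolynomial (Fin n) k)
    (hf : ∀ γ ∈ f.support, N ≤ sdeg n d γ) :
    f ∈ (Ideal.span ((fun i : Fin n => (X i : MvPolynomial (Fin n) k)) ''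
        {i : Fin n | (i : ℕ) < d})) ^ N := by
  rw [f.as_sum]
  exact Ideal.sum_mem _ fun γ hγ => monomial_mem_pow d N γ _ (hf γ hγ)

end Aux

/-- The trace map `Tr : k[x₁,…,xₙ] → k[x₁,…,xₙ]` sending the monomial `x^γ` to `x^δ`
if `γ = p·δ + (p-1)·(1,…,1)` for some `δ ∈ ℕⁿ`, and to `0` otherwise (extended
`k`-linearly). -/
noncomputable def Tr {k : Type*} [CommRing k] {n : ℕ} (p : ℕ)
    (f : MvPolynomial (Fin n) k) : MvPolynomial (Fin n) k :=
  ∑ γ ∈ f.support,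
    if h : ∃ δ : Fin n →₀ ℕ,
        γ = p • δ + Finsupp.equivFunOnFinite.symm (fun _ : Fin n => p - 1) then
      MvPolynomial.monomial h.choose (MvPolynomial.coeff γ f)
    else 0

theorem maximal_vanishing_implies_maximally_compatibly_split
    {k : Type*} [Field k] (p : ℕ) (hp : p.Prime) [CharP k p]
    {n : ℕ} (d : ℕ) (hd1 : 1 ≤ d) (hdn : d ≤ n)
    (s : MvPolynomial (Fin n) k)
    (hs : ∀ α ∈ s.support,
      d * (p - 1) ≤ ∑ i ∈ Finset.univ.filter (fun i : Fin n => (i : ℕ) < d), α i) :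
    ∀ m : ℕ, ∀ w ∈ (Ideal.span ((fun i : Fin n => (X i : MvPolynomial (Fin n) k)) ''
          {i : Fin n | (i : ℕ) < d})) ^ (m * p + 1),
      Tr p (s * w) ∈ (Ideal.span ((fun i : Fin n => (X i : MvPolynomial (Fin n) k)) ''
          {i : Fin n | (i : ℕ) < d})) ^ (m + 1) := by
  intro m w hw
  have hw' : ∀ γ ∈ w.support, m * p + 1 ≤ sdeg n d γ :=
    pow_le_Jid d (m * p + 1) hw
  rw [Tr]
  refine Ideal.sum_mem _ fun γ hγ => ?_
  split
  · rename_i h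
    refine monomial_mem_pow d (m + 1) _ _ ?_
    -- γ = p • δ + const
    have hspec := h.choose_spec
    set δ := h.choose with hδ
    -- γ ∈ support of s * w
    rcases Finset.mem_add.1 (MvPolynomial.support_mul s w hγ) with ⟨a, ha, b, hb, hab⟩
    have hsa : d * (p - 1) ≤ sdeg n d a := hs a ha
    have hsb : m * p + 1 ≤ sdeg n d b := hw' b hb
    have hγsd : d * (p - 1) + (m * p + 1) ≤ sdeg n d γ := by
      rw [← hab, sdeg_add]; exact add_le_add hsa hsb
    -- compute sdeg of the decomposition
    have hconst : sdeg n d (Finsupp.equivFunOnFinite.symm (fun _ : Fin n => p - 1))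
        = d * (p - 1) := by
      have h1 : sdeg n d (Finsupp.equivFunOnFinite.symm (fun _ : Fin n => p - 1)) =
          ∑ _i ∈ Finset.univ.filter (fun i : Fin n => (i : ℕ) < d), (p - 1) :=
        Finset.sum_congr rfl (fun i _ => rfl)
      rw [h1, Finset.sum_const, card_filter_lt d hdn, smul_eq_mul]
    have hsmul : sdeg n d (p • δ) = p * sdeg n d δ := by
      rw [sdeg, sdeg, Finset.mul_sum]
      exact Finset.sum_congr rfl fun i _ => by simp
    have hγsd2 : sdeg n d γ = p * sdeg n d δ + d * (p - 1) := by
      rw [hspec, sdeg_add, hsmul, hconst]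
    have hmp : m * p + 1 ≤ p * sdeg n d δ := by omega
    have : p * m < p * sdeg n d δ := by
      rw [mul_comm] at hmp; omega
    have := Nat.lt_of_mul_lt_mul_left this
    omega
  · exact Ideal.zero_mem _
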